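/- arXiv:1908.11819 — 2 statements merged into one kernel-verified Lean document; each statement's English description precedes it below -/
import Mathlib

section
/- Let A be an array of integers in [0, 2^k) of length n. Define for each t ∈ {1,...,k} arrays A_t of length 2n by: A_t[i] = p_{t−1}(A[i]) if v_t(A[i]) = 1 else −∞, and A_t[n+i] = p_{t−1}(A[i]) if v_t(A[i]) = 0 else +∞ (where −∞ and +∞ are two distinct sentinel values not of the form p_{t−1}(x)). Then for all a ≤ b < c ≤ d, inv_A([a,b],[c,d]) = Σ_{t=1}^{k} eqp_{A_t}([a,b],[n+c,n+d]). -/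
open Finset

/-- The array `A_t` of length `2n` (indices `0,…,2n-1`): position `i < n` holds
`p_{t-1}(A[i])` if the `t`-th most significant bit of `A[i]` is `1`, else the
sentinel `-∞` (modelled as `-1`); position `n+i` holds `p_{t-1}(A[i])` if that
bit is `0`, else the sentinel `+∞` (modelled as `-2`).  The sentinels are
distinct from each other and from every value `p_{t-1}(x) ≥ 0`. -/
def auxArray (n k : ℕ) (A : ℕ → ℕ) (t : ℕ) (i : ℕ) : ℤ :=
  if i < n then
    (if A i / 2 ^ (k - t) % 2 = 1 then ((A i / 2 ^ (k - t + 1) : ℕ) : ℤ) else -1)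
  else
    (if A (i - n) / 2 ^ (k - t) % 2 = 0 then ((A (i - n) / 2 ^ (k - t + 1) : ℕ) : ℤ) else -2)

private lemma divBit (x s j : ℕ) : (x / 2 ^ s).testBit j = x.testBit (s + j) := by
  rw [← Nat.shiftRight_eq_div_pow, Nat.testBit_shiftRight]

/-- The condition in `testBit` form. -/
private lemma cond_iff (x y s : ℕ) :
    (x / 2 ^ s % 2 = 1 ∧ y / 2 ^ s % 2 = 0 ∧ x / 2 ^ (s + 1) = y / 2 ^ (s + 1)) ↔
    (x.testBit s = true ∧ y.testBit s = false ∧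
      ∀ j, s < j → x.testBit j = y.testBit j) := by
  have hx : x.testBit s = true ↔ x / 2 ^ s % 2 = 1 := by
    rw [Nat.testBit_eq_decide_div_mod_eq]; simp
  have hy : y.testBit s = false ↔ y / 2 ^ s % 2 = 0 := by
    rw [Nat.testBit_eq_decide_div_mod_eq]; simp only [decide_eq_false_iff_not]; omega
  constructor
  · rintro ⟨h1, h2, h3⟩
    refine ⟨hx.2 h1, hy.2 h2, fun j hj => ?_⟩
    have : s + 1 + (j - (s + 1)) = j := by omega
    rw [← this, ← divBit, ← divBit, h3]
  · rintro ⟨h1, h2, h3⟩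
    refine ⟨hx.1 h1, hy.1 h2, Nat.eq_of_testBit_eq fun j => ?_⟩
    rw [divBit, divBit]
    exact h3 _ (by omega)

private lemma core (k x y : ℕ) (hx : x < 2 ^ k) :
    ((Finset.range k).filter (fun s => x / 2 ^ s % 2 = 1 ∧ y / 2 ^ s % 2 = 0 ∧
        x / 2 ^ (s + 1) = y / 2 ^ (s + 1))).card = if y < x then 1 else 0 := by
  by_cases h : y < x
  · rw [if_pos h]
    -- existence of the most significant differing bit
    have hne : x ^^^ y ≠ 0 := by
      intro h0
      have : x = y := by
        have := xor_eq_zero_iff.1 h0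
        exact this
      omega
    obtain ⟨i, hi1, hi2⟩ := Nat.exists_most_significant_bit hne
    have hagree : ∀ j, i < j → x.testBit j = y.testBit j := by
      intro j hj
      have := hi2 j hj
      rw [Nat.testBit_xor] at this
      rcases hxb : x.testBit j <;> rcases hyb : y.testBit j <;> simp_all
    have hdiff : x.testBit i ≠ y.testBit i := by
      intro hcontra
      rw [Nat.testBit_xor, hcontra] at hi1
      simp at hi1
    have hxi : x.testBit i = true ∧ y.testBit i = false := by
      rcases hxb : x.testBit i <;> rcases hyb : y.testBit i <;> simp_all
      exact absurd (Nat.lt_of_testBit i hxb hyb fun j hj => hagree j hj) (by omega)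
    have hik : i < k := by
      by_contra hik
      have : x < 2 ^ i := lt_of_lt_of_le hx (Nat.pow_le_pow_right (by norm_num) (by omega))
      rw [Nat.testBit_lt_two_pow this] at hxi
      exact absurd hxi.1 (by simp)
    have hset : (Finset.range k).filter (fun s => x / 2 ^ s % 2 = 1 ∧ y / 2 ^ s % 2 = 0 ∧
        x / 2 ^ (s + 1) = y / 2 ^ (s + 1)) = {i} := by
      ext s
      simp only [Finset.mem_filter, Finset.mem_range, Finset.mem_singleton]
      constructor
      · rintro ⟨hs, hc⟩
        rw [cond_iff] at hc
        obtain ⟨h1, h2, h3⟩ := hc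
        by_contra hsi
        rcases lt_or_gt_of_ne hsi with hlt | hgt
        · have := h3 i hlt
          rw [hxi.1, hxi.2] at this
          exact absurd this (by simp)
        · have := hagree s hgt
          rw [h1, h2] at this
          exact absurd this (by simp)
      · rintro rfl
        exact ⟨hik, (cond_iff x y _).2 ⟨hxi.1, hxi.2, hagree⟩⟩
    rw [hset, Finset.card_singleton]
  · rw [if_neg h]
    rw [Finset.card_eq_zero, Finset.filter_eq_empty_iff]
    intro s _ hc
    rw [cond_iff] at hc
    exact h (Nat.lt_of_testBit s hc.2.1 hc.1 fun j hj => (hc.2.2 j hj).symm)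

private lemma core' (k x y : ℕ) (hx : x < 2 ^ k) :
    ((Finset.Icc 1 k).filter (fun t => x / 2 ^ (k - t) % 2 = 1 ∧ y / 2 ^ (k - t) % 2 = 0 ∧
        x / 2 ^ (k - t + 1) = y / 2 ^ (k - t + 1))).card = if y < x then 1 else 0 := by
  rw [← core k x y hx]
  apply Finset.card_nbij' (fun t => k - t) (fun s => k - s)
  · intro t ht
    simp only [Finset.coe_filter, Set.mem_setOf_eq, Finset.mem_coe, Finset.mem_filter, Finset.mem_Icc, Finset.mem_range] at *
    exact ⟨by omega, ht.2⟩
  · intro s hs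
    simp only [Finset.coe_filter, Set.mem_setOf_eq, Finset.mem_coe, Finset.mem_filter, Finset.mem_Icc, Finset.mem_range] at *
    refine ⟨⟨by omega, by omega⟩, ?_⟩
    have : k - (k - s) = s := by omega
    rw [this]
    exact hs.2
  · intro t ht
    simp only [Finset.coe_filter, Set.mem_setOf_eq, Finset.mem_coe, Finset.mem_filter, Finset.mem_Icc] at ht
    dsimp only
    omega
  · intro s hs
    simp only [Finset.coe_filter, Set.mem_setOf_eq, Finset.mem_coe, Finset.mem_filter, Finset.mem_range] at hs
    dsimp only
    omega

private lemma ite_sentinel (px py : ℕ) (bx byy : Prop) [Decidable bx] [Decidable byy] :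
    ((if bx then (px : ℤ) else -1) = (if byy then (py : ℤ) else -2)) ↔
      (bx ∧ byy ∧ px = py) := by
  split_ifs with h1 h2 h2 <;> simp_all <;> omega

theorem stmt_4 (n k : ℕ) (A : ℕ → ℕ) (hA : ∀ i, A i < 2 ^ k)
    (a b c d : ℕ) (hab : a ≤ b) (hbc : b < c) (hcd : c ≤ d) (hdn : d < n) :
    ((Finset.Icc a b ×ˢ Finset.Icc c d).filter (fun p => A p.2 < A p.1)).card =
      ∑ t ∈ Finset.Icc 1 k,
        ((Finset.Icc a b ×ˢ Finset.Icc (n + c) (n + d)).filter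
          (fun p => auxArray n k A t p.1 = auxArray n k A t p.2)).card := by
  have key : ∀ i j : ℕ, i < n → n ≤ j →
      (∑ t ∈ Finset.Icc 1 k, if auxArray n k A t i = auxArray n k A t j then 1 else 0)
        = if A (j - n) < A i then 1 else 0 := by
    intro i j hi hj
    rw [← core' k (A i) (A (j - n)) (hA i), Finset.card_filter]
    apply Finset.sum_congr rfl
    intro t _
    congr 1
    unfold auxArray
    have hj' : ¬ j < n := by omega
    rw [if_pos hi, if_neg hj']
    exact propext (ite_sentinel _ _ _ _)
  have hswap : ∑ t ∈ Finset.Icc 1 k,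
        ((Finset.Icc a b ×ˢ Finset.Icc (n + c) (n + d)).filter
          (fun p => auxArray n k A t p.1 = auxArray n k A t p.2)).card
      = ∑ p ∈ Finset.Icc a b ×ˢ Finset.Icc (n + c) (n + d),
          if A (p.2 - n) < A p.1 then 1 else 0 := by
    simp only [Finset.card_filter]
    rw [Finset.sum_comm]
    apply Finset.sum_congr rfl
    intro p hp
    obtain ⟨i, j⟩ := p
    simp only [Finset.mem_product, Finset.mem_Icc] at hp
    exact key i j (by omega) (by omega)
  rw [hswap, Finset.card_filter]
  rw [Finset.sum_product, Finset.sum_product]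
  apply Finset.sum_congr rfl
  intro i _
  have hmap : Finset.Icc (n + c) (n + d) = (Finset.Icc c d).map (addLeftEmbedding n) :=
    (Finset.map_add_left_Icc c d n).symm
  rw [hmap, Finset.sum_map]
  apply Finset.sum_congr rfl
  intro j _
  simp [addLeftEmbedding]
end

section
/- Mo's ordering cost bound: Let (l₁,r₁),...,(l_q,r_q) be pairs with 1 ≤ l_i ≤ r_i ≤ n, sorted so that ⌊l_i/B⌋ is nondecreasing and, within equal values of ⌊l_i/B⌋, r_i is nondecreasing (for some integer B ≥ 1). Then Σ_{i=2}^q |l_i − l_{i−1}| ≤ n + 2·B·(q−1) and Σ_{i=2}^q |r_i − r_{i−1}| ≤ (⌈n/B⌉ + 1)·n. -/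
open Finset

theorem stmt_18 (n q B : ℕ) (hn : 1 ≤ n) (hq : 1 ≤ q) (hB : 1 ≤ B)
    (l r : ℕ → ℕ)
    (hbound : ∀ i, 1 ≤ i → i ≤ q → 1 ≤ l i ∧ l i ≤ r i ∧ r i ≤ n)
    (hsortl : ∀ i, 1 ≤ i → i < q → l i / B ≤ l (i + 1) / B)
    (hsortr : ∀ i, 1 ≤ i → i < q → l i / B = l (i + 1) / B → r i ≤ r (i + 1)) :
    (∑ i ∈ Finset.Icc 2 q, |(l i : ℤ) - (l (i - 1) : ℤ)|)
        ≤ (n : ℤ) + 2 * B * (q - 1) ∧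
    (∑ i ∈ Finset.Icc 2 q, |(r i : ℤ) - (r (i - 1) : ℤ)|)
        ≤ (((n + B - 1) / B : ℕ) + 1 : ℤ) * n := by
  have hBpos : 0 < B := hB
  obtain ⟨b, hbdef⟩ : ∃ b : ℕ → ℕ, ∀ i, b i = l i / B := ⟨_, fun _ => rfl⟩
  obtain ⟨M, hM⟩ : ∃ M : ℕ, M = n / B := ⟨_, rfl⟩
  obtain ⟨C, hC⟩ : ∃ C : ℕ, C = (n + B - 1) / B := ⟨_, rfl⟩
  have hB0 : (0:ℤ) < B := by exact_mod_cast hBpos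
  -- basic block facts
  have hlow : ∀ i, B * b i ≤ l i := by
    intro i; rw [hbdef]; exact Nat.mul_div_le (l i) B
  have hhigh : ∀ i, l i < b i * B + B := by
    intro i
    have h := (Nat.div_lt_iff_lt_mul hBpos).1 (Nat.lt_succ_self (l i / B))
    rw [Nat.succ_mul] at h
    rw [hbdef]; exact h
  have hstep : ∀ i, 2 ≤ i → i ≤ q → b (i-1) ≤ b i := by
    intro i h2 hiq
    have := hsortl (i-1) (by omega) (by omega)
    rw [show i - 1 + 1 = i by omega] at this
    rw [hbdef, hbdef]; exact this
  have hmono : ∀ i j, 1 ≤ i → i ≤ j → j ≤ q → b i ≤ b j := by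
    intro i j hi
    induction j with
    | zero => intro h1 h2; omega
    | succ k ih =>
      intro hij hjq
      rcases Nat.eq_or_lt_of_le hij with h | h
      · rw [h]
      · refine le_trans (ih (by omega) (by omega)) ?_
        have := hstep (k+1) (by omega) hjq
        simpa using this
  -- telescoping
  have tele : ∀ f : ℕ → ℕ, ∑ i ∈ Icc 2 q, ((f i : ℤ) - f (i-1)) = (f q : ℤ) - f 1 := by
    intro f
    rw [← Finset.Ico_add_one_right_eq_Icc, Finset.sum_Ico_eq_sum_range,
      show q + 1 - 2 = q - 1 by omega]
    have e2 : ∑ j ∈ range (q-1), ((f (2+j) : ℤ) - f (2+j-1))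
        = ∑ j ∈ range (q-1), ((f (j+1+1) : ℤ) - f (j+1)) := by
      refine Finset.sum_congr rfl fun j _ => ?_
      rw [show 2+j-1 = j+1 by omega, show 2+j = j+1+1 by omega]
    rw [e2, Finset.sum_range_sub (fun j => (f (j+1):ℤ)) (q-1),
      show q-1+1 = q by omega]
  have hcard : (Icc 2 q).card = q - 1 := by rw [Nat.card_Icc]; omega
  have hlq := hbound q hq le_rfl
  have hl1 := hbound 1 le_rfl hq
  have hlqn : (l q : ℤ) ≤ n := by exact_mod_cast le_trans hlq.2.1 hlq.2.2
  have hl11 : (1:ℤ) ≤ l 1 := by exact_mod_cast hl1.1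
  constructor
  · -- Part 1
    have key1 : ∀ i ∈ Icc 2 q, |(l i : ℤ) - (l (i-1) : ℤ)| ≤ ((l i : ℤ) - l (i-1)) + 2*B := by
      intro i hi
      simp only [mem_Icc] at hi
      have h1 : ((b (i-1) : ℤ)) ≤ b i := by exact_mod_cast hstep i hi.1 hi.2
      have h2 : (l (i-1) : ℤ) < b (i-1) * B + B := by exact_mod_cast hhigh (i-1)
      have h4 : (B:ℤ) * b i ≤ l i := by exact_mod_cast hlow i
      have h6 : (l (i-1) : ℤ) - l i ≤ B := by nlinarith [mul_le_mul_of_nonneg_right h1 (le_of_lt hB0)]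
      rcases abs_cases ((l i : ℤ) - (l (i-1) : ℤ)) with ⟨he, _⟩ | ⟨he, _⟩ <;> rw [he] <;>
        linarith
    calc ∑ i ∈ Icc 2 q, |(l i : ℤ) - (l (i-1) : ℤ)|
        ≤ ∑ i ∈ Icc 2 q, (((l i : ℤ) - l (i-1)) + 2*B) := Finset.sum_le_sum key1
      _ = ((l q : ℤ) - l 1) + (Icc 2 q).card • (2*(B:ℤ)) := by
          rw [Finset.sum_add_distrib, tele l, Finset.sum_const]
      _ ≤ (n : ℤ) + 2 * B * (q - 1) := by
          rw [hcard, nsmul_eq_mul]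
          have h7 : ((q - 1 : ℕ) : ℤ) = (q:ℤ) - 1 := by omega
          rw [h7]
          have h8 : ((q:ℤ)-1) * (2*B) = 2*B*((q:ℤ)-1) := by ring
          rw [h8]
          linarith
  · -- Part 2
    have hrq := hbound q hq le_rfl
    have hBM : (B:ℤ) * M ≤ n := by
      rw [hM]; exact_mod_cast Nat.mul_div_le n B
    have hnBM : (n:ℤ) < M * B + B := by
      have h := (Nat.div_lt_iff_lt_mul hBpos).1 (Nat.lt_succ_self (n / B))
      rw [Nat.succ_mul] at h
      rw [hM]
      exact_mod_cast h
    have hMC : (M:ℤ) ≤ C := by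
      rw [hM, hC]
      exact_mod_cast Nat.div_le_div_right (by omega : n ≤ n + B - 1)
    have key2 : ∀ i ∈ Icc 2 q, |(r i : ℤ) - (r (i-1) : ℤ)| ≤
        ((r i : ℤ) - r (i-1)) + 2 * (if b (i-1) < b i then (n:ℤ) - B * b i else 0) := by
      intro i hi
      simp only [mem_Icc] at hi
      have hbi := hbound i (by omega) hi.2
      have hbi1 := hbound (i-1) (by omega) (by omega)
      have h1 : b (i-1) ≤ b i := hstep i hi.1 hi.2
      by_cases hcase : b (i-1) < b i
      · rw [if_pos hcase]
        have h4 : (B:ℤ) * b i ≤ r i := by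
          exact_mod_cast le_trans (hlow i) hbi.2.1
        have h5 : (r i : ℤ) ≤ n := by exact_mod_cast hbi.2.2
        have h6 : (r (i-1) : ℤ) ≤ n := by exact_mod_cast hbi1.2.2
        rcases abs_cases ((r i : ℤ) - (r (i-1) : ℤ)) with ⟨he, _⟩ | ⟨he, _⟩ <;> rw [he] <;>
          linarith
      · rw [if_neg hcase]
        have heq : b (i-1) = b i := by omega
        rw [hbdef, hbdef] at heq
        have h8 := hsortr (i-1) (by omega) (by omega)
        rw [show i - 1 + 1 = i by omega] at h8
        have h9 : (r (i-1) : ℤ) ≤ r i := by exact_mod_cast h8 heq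
        rw [abs_of_nonneg (by linarith)]
        linarith
    have hinj : ∀ i ∈ (Icc 2 q).filter (fun i => b (i-1) < b i),
        ∀ j ∈ (Icc 2 q).filter (fun i => b (i-1) < b i), b i = b j → i = j := by
      intro i hiT j hjT hbij
      simp only [mem_filter, mem_Icc] at hiT hjT
      by_contra hne
      rcases lt_or_gt_of_ne hne with h | h
      · have : b i ≤ b (j-1) := hmono i (j-1) (by omega) (by omega) (by omega)
        omega
      · have : b j ≤ b (i-1) := hmono j (i-1) (by omega) (by omega) (by omega)
        omega
    have himg : ((Icc 2 q).filter (fun i => b (i-1) < b i)).image b ⊆ Icc 1 M := by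
      intro v hv
      simp only [mem_image, mem_filter, mem_Icc] at hv
      obtain ⟨i, hiT, rfl⟩ := hv
      have hbi := hbound i (by omega) hiT.1.2
      simp only [mem_Icc]
      refine ⟨by omega, ?_⟩
      rw [hbdef, hM]
      exact Nat.div_le_div_right (le_trans hbi.2.1 hbi.2.2)
    have gauss : ∀ m : ℕ, 2 * ∑ v ∈ Icc 1 m, (v:ℤ) = m * (m+1) := by
      intro m
      induction m with
      | zero => simp
      | succ k ih =>
        rw [← Finset.Ico_add_one_right_eq_Icc, Finset.sum_Ico_succ_top (by omega), Finset.Ico_add_one_right_eq_Icc]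
        push_cast
        push_cast at ih
        ring_nf
        ring_nf at ih
        linarith
    have hsumT : ∑ i ∈ (Icc 2 q).filter (fun i => b (i-1) < b i), ((n:ℤ) - B * b i)
        ≤ ∑ v ∈ Icc 1 M, ((n:ℤ) - B * v) := by
      rw [← Finset.sum_image (f := fun v : ℕ => (n:ℤ) - B * v) hinj]
      refine Finset.sum_le_sum_of_subset_of_nonneg himg ?_
      intro v hv _
      simp only [mem_Icc] at hv
      have h1 : (v:ℤ) ≤ M := by exact_mod_cast hv.2
      have h2 : (B:ℤ) * v ≤ B * M := mul_le_mul_of_nonneg_left h1 hB0.le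
      linarith
    have hSval : 2 * ∑ v ∈ Icc 1 M, ((n:ℤ) - B * v) = 2 * M * n - B * (M * (M+1)) := by
      rw [Finset.sum_sub_distrib, Finset.sum_const, Nat.card_Icc, ← Finset.mul_sum,
        nsmul_eq_mul]
      have h7 : ((M + 1 - 1 : ℕ) : ℤ) = (M:ℤ) := by omega
      rw [h7]
      linear_combination (-(B:ℤ)) * gauss M
    have main : ∑ i ∈ Icc 2 q, |(r i : ℤ) - (r (i-1) : ℤ)| ≤
        ((r q : ℤ) - r 1) + 2 * ∑ i ∈ (Icc 2 q).filter (fun i => b (i-1) < b i), ((n:ℤ) - B * b i) := by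
      calc ∑ i ∈ Icc 2 q, |(r i : ℤ) - (r (i-1) : ℤ)|
          ≤ ∑ i ∈ Icc 2 q, (((r i : ℤ) - r (i-1)) +
              2 * (if b (i-1) < b i then (n:ℤ) - B * b i else 0)) := Finset.sum_le_sum key2
        _ = ((r q : ℤ) - r 1) + 2 * ∑ i ∈ (Icc 2 q).filter (fun i => b (i-1) < b i), ((n:ℤ) - B * b i) := by
            rw [Finset.sum_add_distrib, tele r, Finset.sum_filter, Finset.mul_sum]
    have hr1 : (1:ℤ) ≤ r 1 := by exact_mod_cast le_trans hl1.1 hl1.2.1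
    have hrqn : (r q : ℤ) ≤ n := by exact_mod_cast hrq.2.2
    have h2S : 2 * ∑ i ∈ (Icc 2 q).filter (fun i => b (i-1) < b i), ((n:ℤ) - B * b i)
        ≤ 2 * M * n - B * (M * (M+1)) := by
      rw [← hSval]; linarith
    have hM0 : (0:ℤ) ≤ M := by positivity
    have hn1 : (1:ℤ) ≤ n := by exact_mod_cast hn
    have e1 : (M:ℤ) * n ≤ M * (M * B + B) :=
      mul_le_mul_of_nonneg_left (le_of_lt hnBM) hM0
    have e2 : (M:ℤ) * n ≤ C * n :=
      mul_le_mul_of_nonneg_right hMC (by linarith)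
    calc ∑ i ∈ Icc 2 q, |(r i : ℤ) - (r (i-1) : ℤ)|
        ≤ ((r q : ℤ) - r 1) + 2 * ∑ i ∈ (Icc 2 q).filter (fun i => b (i-1) < b i), ((n:ℤ) - B * b i) := main
      _ ≤ (((n + B - 1) / B : ℕ) + 1 : ℤ) * n := by
          rw [← hC]
          linarith [e1, e2, h2S, hrqn, hr1, hn1]
end
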